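/- Let α ∈ (0,1], M ≥ 1, and let g : ℝ → ℝ be a function such that the bivariate map F(x,y) = g(x+y) − g(x) − g(y) is Hölder continuous with exponent α on [−M,M]², i.e., there exists K ≥ 0 with |F(p) − F(q)| ≤ K·|p − q|^α for all p, q ∈ [−M,M]². Then there exist a function f : [−M,M] → ℝ that is Hölder continuous with exponent α on [−M,M] (there is K' ≥ 0 with |f(x) − f(y)| ≤ K'·|x − y|^α for all x, y ∈ [−M,M]) and a function A : [−M,M] → ℝ satisfying A(x+y) = A(x) + A(y) whenever x, y, x+y all lie in [−M,M], such that g(x) = f(x) + A(x) for all x ∈ [−M,M]. -/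

import Mathlib

open MeasureTheory Set

/-- Let `α ∈ (0,1]`, `M ≥ 1`, and suppose `F(x,y) = g(x+y) - g(x) - g(y)` is
Hölder continuous with exponent `α` on `[-M,M]²` (Euclidean norm). Then on
`[-M,M]` one can write `g = f + A` where `f` is Hölder continuous with
exponent `α` on `[-M,M]` and `A` satisfies `A(x+y) = A(x) + A(y)` whenever
`x, y, x+y ∈ [-M,M]`. -/
theorem stmt_10 (α M : ℝ) (hα0 : 0 < α) (hα1 : α ≤ 1) (hM : 1 ≤ M)
    (g : ℝ → ℝ)
    (hF : ∃ K : ℝ, 0 ≤ K ∧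
      ∀ p ∈ Set.Icc (-M) M ×ˢ Set.Icc (-M) M,
      ∀ q ∈ Set.Icc (-M) M ×ˢ Set.Icc (-M) M,
        |(g (p.1 + p.2) - g p.1 - g p.2) - (g (q.1 + q.2) - g q.1 - g q.2)|
          ≤ K * (Real.sqrt ((p.1 - q.1) ^ 2 + (p.2 - q.2) ^ 2)) ^ α) :
    ∃ f A : ℝ → ℝ,
      (∃ K' : ℝ, 0 ≤ K' ∧ ∀ x ∈ Set.Icc (-M) M, ∀ y ∈ Set.Icc (-M) M,
        |f x - f y| ≤ K' * |x - y| ^ α) ∧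
      (∀ x y : ℝ, x ∈ Set.Icc (-M) M → y ∈ Set.Icc (-M) M →
        x + y ∈ Set.Icc (-M) M → A (x + y) = A x + A y) ∧
      (∀ x ∈ Set.Icc (-M) M, g x = f x + A x) := by
  obtain ⟨K, hK0, hK⟩ := hF
  have hM0 : (0:ℝ) < M := lt_of_lt_of_le one_pos hM
  have hmem0 : (0:ℝ) ∈ Set.Icc (-M) M := ⟨by linarith, hM0.le⟩
  have hmem1 : (1:ℝ) ∈ Set.Icc (-M) M := ⟨by linarith, hM⟩
  set B : ℝ → ℝ → ℝ := fun x y => g (x + y) - g x - g y with hBdef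
  have hKB : ∀ x ∈ Set.Icc (-M) M, ∀ y ∈ Set.Icc (-M) M, ∀ x' ∈ Set.Icc (-M) M,
      ∀ y' ∈ Set.Icc (-M) M,
      |B x y - B x' y'| ≤ K * Real.sqrt ((x - x') ^ 2 + (y - y') ^ 2) ^ α := by
    intro x hx y hy x' hx' y' hy'
    exact hK (x, y) (Set.mk_mem_prod hx hy) (x', y') (Set.mk_mem_prod hx' hy')
  have hB2 : ∀ x ∈ Set.Icc (-M) M, ∀ z ∈ Set.Icc (-M) M, ∀ z' ∈ Set.Icc (-M) M,
      |B x z - B x z'| ≤ K * |z - z'| ^ α := by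
    intro x hx z hz z' hz'
    have h := hKB x hx z hz x hx z' hz'
    have hs : Real.sqrt ((x - x) ^ 2 + (z - z') ^ 2) = |z - z'| := by
      rw [sub_self]
      norm_num [Real.sqrt_sq_eq_abs]
    rwa [hs] at h
  have hB1 : ∀ x ∈ Set.Icc (-M) M, ∀ y ∈ Set.Icc (-M) M, ∀ z ∈ Set.Icc (-M) M,
      |B x z - B y z| ≤ K * |x - y| ^ α := by
    intro x hx y hy z hz
    have h := hKB x hx z hz y hy z hz
    have hs : Real.sqrt ((x - y) ^ 2 + (z - z) ^ 2) = |x - y| := by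
      rw [sub_self]
      norm_num [Real.sqrt_sq_eq_abs]
    rwa [hs] at h
  -- continuity of B a · on [-M,M]
  have hCont : ∀ a ∈ Set.Icc (-M) M, ContinuousOn (fun z => B a z) (Set.Icc (-M) M) := by
    intro a ha z hz
    have h2 : ContinuousAt (fun t : ℝ => K * t ^ α) 0 :=
      continuousAt_const.mul (Real.continuousAt_rpow_const 0 α (Or.inr hα0.le))
    have h1 : Filter.Tendsto (fun z' : ℝ => |z' - z|) (nhdsWithin z (Set.Icc (-M) M))
        (nhds 0) := by
      have hc : Continuous (fun z' : ℝ => |z' - z|) := (continuous_id.sub continuous_const).abs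
      have := (hc.tendsto z).mono_left (nhdsWithin_le_nhds (s := Set.Icc (-M) M))
      simpa using this
    have htend : Filter.Tendsto (fun z' : ℝ => K * |z' - z| ^ α)
        (nhdsWithin z (Set.Icc (-M) M)) (nhds 0) := by
      have := h2.tendsto.comp h1
      simpa [Function.comp_def, Real.zero_rpow hα0.ne'] using this
    have : Filter.Tendsto (fun z' => B a z') (nhdsWithin z (Set.Icc (-M) M))
        (nhds (B a z)) := by
      rw [tendsto_iff_dist_tendsto_zero]
      refine squeeze_zero' (Filter.Eventually.of_forall fun _ => dist_nonneg) ?_ htend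
      filter_upwards [self_mem_nhdsWithin] with z' hz'
      rw [Real.dist_eq]
      exact hB2 a ha z' hz' z hz
    exact this
  have hsub : ∀ u ∈ Set.Icc (-M) M, ∀ v ∈ Set.Icc (-M) M,
      Set.uIcc u v ⊆ Set.Icc (-M) M := by
    intro u hu v hv t ht
    rcases Set.mem_uIcc.mp ht with ⟨h1, h2⟩ | ⟨h1, h2⟩
    · exact ⟨by linarith [hu.1], by linarith [hv.2]⟩
    · exact ⟨by linarith [hv.1], by linarith [hu.2]⟩
  have hInt : ∀ a ∈ Set.Icc (-M) M, ∀ u ∈ Set.Icc (-M) M, ∀ v ∈ Set.Icc (-M) M,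
      IntervalIntegrable (fun z => B a z) volume u v := by
    intro a ha u hu v hv
    exact ((hCont a ha).mono (hsub u hu v hv)).intervalIntegrable
  set Φ : ℝ → ℝ := fun x => ∫ w in (0:ℝ)..x, B 1 w with hPhi
  set β : ℝ → ℝ := fun x => ∫ z in (0:ℝ)..1, B x z with hbeta
  -- key identity
  have key : ∀ x ∈ Set.Icc (-M) M, ∀ y ∈ Set.Icc (-M) M, x + y ∈ Set.Icc (-M) M →
      Φ (x + y) - Φ x - Φ y = (β (x + y) - β x - β y) + B x y := by
    intro x hx y hy hxy
    have I1 : IntervalIntegrable (fun z => B (x + y) z) volume 0 1 :=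
      hInt _ hxy _ hmem0 _ hmem1
    have I2 : IntervalIntegrable (fun z => B x z) volume 0 1 := hInt _ hx _ hmem0 _ hmem1
    have hpt1 : (fun z => B y (x + z)) = fun z => B (x + y) z - B x z + B x y := by
      funext z; simp only [hBdef]; ring
    have E1 : (∫ z in (0:ℝ)..1, B y (x + z)) = β (x + y) - β x + B x y := by
      rw [hpt1, intervalIntegral.integral_add (I1.sub I2) intervalIntegrable_const,
        intervalIntegral.integral_sub I1 I2, intervalIntegral.integral_const]
      simp [hbeta]
    have E2 : (∫ z in (0:ℝ)..1, B y (x + z)) = ∫ w in x..(x + 1), B y w := by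
      rw [intervalIntegral.integral_comp_add_left (fun w => B y w) x]
      norm_num
    have hmapsto1 : ∀ w ∈ Set.uIcc (1:ℝ) (x + 1), w - 1 ∈ Set.Icc (-M) M := by
      intro w hw
      rcases Set.mem_uIcc.mp hw with ⟨h1, h2⟩ | ⟨h1, h2⟩ <;>
        exact ⟨by linarith [hx.1, hx.2], by linarith [hx.1, hx.2]⟩
    have hmapsto2 : ∀ w ∈ Set.uIcc (1:ℝ) (x + 1), w - 1 + y ∈ Set.Icc (-M) M := by
      intro w hw
      rcases Set.mem_uIcc.mp hw with ⟨h1, h2⟩ | ⟨h1, h2⟩ <;>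
        exact ⟨by linarith [hy.1, hxy.1], by linarith [hy.2, hxy.2]⟩
    have hcont1x : ContinuousOn (fun w => B y w) (Set.uIcc 1 (x + 1)) := by
      have hid : (fun w => B y w) = fun w => B y (w - 1) - B 1 (w - 1) + B 1 (w - 1 + y) := by
        funext w; simp only [hBdef]; ring
      rw [hid]
      have c1 : ContinuousOn (fun w : ℝ => B y (w - 1)) (Set.uIcc 1 (x + 1)) :=
        (hCont y hy).comp ((continuous_id.sub continuous_const).continuousOn)
          (fun w hw => hmapsto1 w hw)
      have c2 : ContinuousOn (fun w : ℝ => B 1 (w - 1)) (Set.uIcc 1 (x + 1)) :=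
        (hCont 1 hmem1).comp ((continuous_id.sub continuous_const).continuousOn)
          (fun w hw => hmapsto1 w hw)
      have c3 : ContinuousOn (fun w : ℝ => B 1 (w - 1 + y)) (Set.uIcc 1 (x + 1)) :=
        (hCont 1 hmem1).comp
          (((continuous_id.sub continuous_const).add continuous_const).continuousOn)
          (fun w hw => hmapsto2 w hw)
      exact (c1.sub c2).add c3
    have J1 : IntervalIntegrable (fun w => B y w) volume x 1 := hInt _ hy _ hx _ hmem1
    have J2 : IntervalIntegrable (fun w => B y w) volume 1 (x + 1) :=
      hcont1x.intervalIntegrable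
    have E3 : (∫ w in x..(x + 1), B y w)
        = (∫ w in x..(1:ℝ), B y w) + ∫ w in (1:ℝ)..(x + 1), B y w :=
      (intervalIntegral.integral_add_adjacent_intervals J1 J2).symm
    have E4 : β y = (∫ w in (0:ℝ)..x, B y w) + ∫ w in x..(1:ℝ), B y w := by
      simp only [hbeta]
      exact (intervalIntegral.integral_add_adjacent_intervals (hInt _ hy _ hmem0 _ hx) J1).symm
    have E5 : (∫ w in (1:ℝ)..(x + 1), B y w) = ∫ u in (0:ℝ)..x, B y (1 + u) := by
      rw [intervalIntegral.integral_comp_add_left (fun w => B y w) 1]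
      norm_num [add_comm]
    have hmapsto4 : ∀ u ∈ Set.uIcc (0:ℝ) x, u + y ∈ Set.Icc (-M) M := by
      intro u hu
      rcases Set.mem_uIcc.mp hu with ⟨h1, h2⟩ | ⟨h1, h2⟩ <;>
        exact ⟨by linarith [hy.1, hxy.1], by linarith [hy.2, hxy.2]⟩
    have c4 : ContinuousOn (fun u : ℝ => B 1 (u + y)) (Set.uIcc 0 x) :=
      (hCont 1 hmem1).comp ((continuous_id.add continuous_const).continuousOn)
        (fun u hu => hmapsto4 u hu)
    have I4 : IntervalIntegrable (fun u => B 1 (u + y)) volume 0 x := c4.intervalIntegrable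
    have I5 : IntervalIntegrable (fun u => B y u) volume 0 x := hInt _ hy _ hmem0 _ hx
    have I6 : IntervalIntegrable (fun u => B 1 u) volume 0 x := hInt _ hmem1 _ hmem0 _ hx
    have hpt2 : (fun u => B y (1 + u)) = fun u => B y u - B 1 u + B 1 (u + y) := by
      funext u; simp only [hBdef]; ring
    have E6 : (∫ u in (0:ℝ)..x, B y (1 + u))
        = (∫ u in (0:ℝ)..x, B y u) - (∫ u in (0:ℝ)..x, B 1 u)
          + ∫ u in (0:ℝ)..x, B 1 (u + y) := by
      rw [hpt2, intervalIntegral.integral_add (I5.sub I6) I4,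
        intervalIntegral.integral_sub I5 I6]
    have E7 : (∫ u in (0:ℝ)..x, B 1 (u + y)) = ∫ w in y..(x + y), B 1 w := by
      rw [intervalIntegral.integral_comp_add_right (fun w => B 1 w) y]
      norm_num
    have E8 : (∫ w in y..(x + y), B 1 w) = Φ (x + y) - Φ y := by
      have h := intervalIntegral.integral_add_adjacent_intervals
        (hInt _ hmem1 _ hmem0 _ hy) (hInt _ hmem1 _ hy _ hxy)
      simp only [hPhi]
      linarith [h]
    have hPhiX : Φ x = ∫ u in (0:ℝ)..x, B 1 u := by simp only [hPhi]
    have hBw : (∫ w in (0:ℝ)..x, B y w) = ∫ u in (0:ℝ)..x, B y u := rfl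
    linarith [E1, E2, E3, E4, E5, E6, E7, E8, hPhiX, hBw]
  -- the decomposition
  refine ⟨fun x => Φ x - β x, fun x => g x - (Φ x - β x), ?_, ?_, ?_⟩
  · -- Hölder bound
    have h2M : (0:ℝ) < 2 * M := by linarith
    set C0 : ℝ := |g 0| + K * M ^ α with hC0def
    have hC0nn : 0 ≤ C0 := by
      have : (0:ℝ) ≤ K * M ^ α := mul_nonneg hK0 (Real.rpow_nonneg hM0.le _)
      simp only [hC0def]
      positivity
    refine ⟨K + C0 * (2 * M) ^ (1 - α), ?_, ?_⟩
    · have h1 : (0:ℝ) ≤ (2 * M) ^ (1 - α) := Real.rpow_nonneg h2M.le _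
      have := mul_nonneg hC0nn h1
      linarith
    · intro x hx y hy
      rcases eq_or_ne x y with rfl | hne
      · simp [Real.zero_rpow hα0.ne']
      · have hd : (0:ℝ) < |x - y| := abs_pos.mpr (sub_ne_zero.mpr hne)
        have hd2M : |x - y| ≤ 2 * M :=
          abs_sub_le_iff.mpr ⟨by linarith [hx.2, hy.1], by linarith [hy.2, hx.1]⟩
        -- bound on β difference
        have hbb : |β x - β y| ≤ K * |x - y| ^ α := by
          have hInt1 : IntervalIntegrable (fun z => B x z) volume 0 1 :=
            hInt _ hx _ hmem0 _ hmem1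
          have hInt2 : IntervalIntegrable (fun z => B y z) volume 0 1 :=
            hInt _ hy _ hmem0 _ hmem1
          have heq : β x - β y = ∫ z in (0:ℝ)..1, (B x z - B y z) := by
            simp only [hbeta]
            rw [intervalIntegral.integral_sub hInt1 hInt2]
          rw [heq]
          have hb := intervalIntegral.norm_integral_le_of_norm_le_const
            (C := K * |x - y| ^ α) (f := fun z => B x z - B y z) (a := (0:ℝ)) (b := 1) ?_
          · rw [Real.norm_eq_abs] at hb
            simpa using hb
          · intro z hz
            rw [Set.uIoc_of_le (by norm_num : (0:ℝ) ≤ 1)] at hz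
            have hzI : z ∈ Set.Icc (-M) M := ⟨by linarith [hz.1], le_trans hz.2 hM⟩
            rw [Real.norm_eq_abs]
            exact hB1 x hx y hy z hzI
        -- bound on Φ difference
        have hPb : |Φ x - Φ y| ≤ C0 * |x - y| := by
          have heq : Φ x - Φ y = ∫ w in y..x, B 1 w := by
            have h := intervalIntegral.integral_add_adjacent_intervals
              (hInt _ hmem1 _ hmem0 _ hy) (hInt _ hmem1 _ hy _ hx)
            simp only [hPhi]
            linarith [h]
          rw [heq]
          have hb := intervalIntegral.norm_integral_le_of_norm_le_const
            (C := C0) (f := fun w => B 1 w) (a := y) (b := x) ?_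
          · rw [Real.norm_eq_abs] at hb
            first
            | exact hb
            | rwa [abs_sub_comm y x] at hb
            | rwa [abs_sub_comm x y] at hb
          · intro w hw
            have hwI : w ∈ Set.Icc (-M) M := by
              rcases Set.mem_uIoc.mp hw with ⟨h1, h2⟩ | ⟨h1, h2⟩
              · exact ⟨by linarith [hy.1], by linarith [hx.2]⟩
              · exact ⟨by linarith [hx.1], by linarith [hy.2]⟩
            rw [Real.norm_eq_abs]
            have h := hB2 1 hmem1 w hwI 0 hmem0
            rw [sub_zero] at h
            have hB10 : B 1 0 = -g 0 := by simp [hBdef]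
            have habs : |B 1 w| ≤ |B 1 w - B 1 0| + |B 1 0| := by
              calc |B 1 w| = |(B 1 w - B 1 0) + B 1 0| := by ring_nf
              _ ≤ |B 1 w - B 1 0| + |B 1 0| := abs_add_le _ _
            have hwle : K * |w| ^ α ≤ K * M ^ α := by
              apply mul_le_mul_of_nonneg_left _ hK0
              exact Real.rpow_le_rpow (abs_nonneg _)
                (abs_le.mpr ⟨hwI.1, hwI.2⟩) hα0.le
            have hB10abs : |B 1 0| = |g 0| := by rw [hB10, abs_neg]
            calc |B 1 w| ≤ |B 1 w - B 1 0| + |g 0| := by rw [← hB10abs]; exact habs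
            _ ≤ K * |w| ^ α + |g 0| := by linarith [h]
            _ ≤ K * M ^ α + |g 0| := by linarith [hwle]
            _ = C0 := by rw [hC0def]; ring
        -- combine
        have hsplit : (Φ x - β x) - (Φ y - β y) = (Φ x - Φ y) - (β x - β y) := by ring
        have htri : |(Φ x - β x) - (Φ y - β y)| ≤ |Φ x - Φ y| + |β x - β y| := by
          rw [hsplit, sub_eq_add_neg]
          exact (abs_add_le _ _).trans (by rw [abs_neg])
        have hdpow : |x - y| ≤ (2 * M) ^ (1 - α) * |x - y| ^ α := by
          have h1 : |x - y| = |x - y| ^ α * |x - y| ^ (1 - α) := by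
            rw [← Real.rpow_add hd]
            norm_num
          have h2 : |x - y| ^ (1 - α) ≤ (2 * M) ^ (1 - α) :=
            Real.rpow_le_rpow (abs_nonneg _) hd2M (by linarith)
          calc |x - y| = |x - y| ^ α * |x - y| ^ (1 - α) := h1
          _ ≤ |x - y| ^ α * (2 * M) ^ (1 - α) :=
              mul_le_mul_of_nonneg_left h2 (Real.rpow_nonneg (abs_nonneg _) _)
          _ = (2 * M) ^ (1 - α) * |x - y| ^ α := by ring
        have hfin : C0 * |x - y| ≤ C0 * ((2 * M) ^ (1 - α) * |x - y| ^ α) :=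
          mul_le_mul_of_nonneg_left hdpow hC0nn
        have hexp : (K + C0 * (2 * M) ^ (1 - α)) * |x - y| ^ α
            = K * |x - y| ^ α + C0 * ((2 * M) ^ (1 - α) * |x - y| ^ α) := by ring
        rw [hexp]
        linarith [htri, hbb, hPb, hfin]
  · -- additivity
    intro x y hx hy hxy
    have h := key x hx y hy hxy
    have hBxy : B x y = g (x + y) - g x - g y := by simp [hBdef]
    rw [hBxy] at h
    show g (x + y) - (Φ (x + y) - β (x + y)) = (g x - (Φ x - β x)) + (g y - (Φ y - β y))
    linarith [h]
  · -- decomposition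
    intro x hx
    show g x = (Φ x - β x) + (g x - (Φ x - β x))
    ring
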